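/- Assume the discrete-time system is exponentially stable (|λ| < 1 for all λ in the spectrum of A), the exosystem is one-dimensional with q = 1 and S = 1 ∈ ℂ, and the transfer function value P(1) : U → Y is surjective. Let Z be a complex Hilbert space, set G₁ = I_Z, let G₂ : Y → Z be a bounded operator with bounded inverse, and let K₀ : Z → U be a bounded operator such that the spectrum of G₂ P(1) K₀ : Z → Z is contained in the open left half-plane {λ ∈ ℂ : Re λ < 0}. Then there exists ε* > 0 such that for every 0 < ε ≤ ε* the controller (G₁, G₂, ε K₀) solves the robust output regulation problem. -/

import Mathlib

noncomputable section

open ContinuousLinearMap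

variable {X Z U Ud Y W : Type*}
  [NormedAddCommGroup X] [NormedSpace ℂ X]
  [NormedAddCommGroup Z] [NormedSpace ℂ Z]
  [NormedAddCommGroup U] [NormedSpace ℂ U]
  [NormedAddCommGroup Ud] [NormedSpace ℂ Ud]
  [NormedAddCommGroup Y] [NormedSpace ℂ Y]
  [NormedAddCommGroup W] [NormedSpace ℂ W]

/-- The closed-loop system operator `A_e` on `X × Z`:
`A_e(x,z) = (Ax + BKz, G₂Cx + G₁z + G₂DKz)`. -/
def Ae (A : X →L[ℂ] X) (B : U →L[ℂ] X) (C : X →L[ℂ] Y) (D : U →L[ℂ] Y)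
    (G₁ : Z →L[ℂ] Z) (G₂ : Y →L[ℂ] Z) (K : Z →L[ℂ] U) : (X × Z) →L[ℂ] (X × Z) :=
  ((A.comp (fst ℂ X Z)) + ((B.comp K).comp (snd ℂ X Z))).prod
    ((G₂.comp (C.comp (fst ℂ X Z))) + (G₁.comp (snd ℂ X Z))
      + ((G₂.comp (D.comp K)).comp (snd ℂ X Z)))

/-- The closed-loop input operator `B_e v = (B_d E v, G₂(D_d E v + F v))`. -/
def Be (Bd : Ud →L[ℂ] X) (Dd : Ud →L[ℂ] Y) (E : W →L[ℂ] Ud) (F : W →L[ℂ] Y)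
    (G₂ : Y →L[ℂ] Z) : W →L[ℂ] (X × Z) :=
  (Bd.comp E).prod (G₂.comp ((Dd.comp E) + F))

/-- The closed-loop output operator `C_e(x,z) = Cx + DKz`. -/
def Ce (C : X →L[ℂ] Y) (D : U →L[ℂ] Y) (K : Z →L[ℂ] U) : (X × Z) →L[ℂ] Y :=
  C.comp (fst ℂ X Z) + (D.comp K).comp (snd ℂ X Z)

/-- The closed-loop feedthrough operator `D_e = D_d E + F`. -/
def De (Dd : Ud →L[ℂ] Y) (E : W →L[ℂ] Ud) (F : W →L[ℂ] Y) : W →L[ℂ] Y :=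
  (Dd.comp E) + F

/-- The controller `(G₁, G₂, K)` solves the output regulation problem: the closed-loop
system is exponentially stable and the regulation error decays at a uniform exponential
rate for all initial states of the system, the controller and the exosystem. -/
def SolvesORP (A : X →L[ℂ] X) (B : U →L[ℂ] X) (Bd : Ud →L[ℂ] X)
    (C : X →L[ℂ] Y) (D : U →L[ℂ] Y) (Dd : Ud →L[ℂ] Y)
    (S : W →L[ℂ] W) (E : W →L[ℂ] Ud) (F : W →L[ℂ] Y)
    (G₁ : Z →L[ℂ] Z) (G₂ : Y →L[ℂ] Z) (K : Z →L[ℂ] U) : Prop :=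
  (∀ lam ∈ spectrum ℂ (Ae A B C D G₁ G₂ K), ‖lam‖ < 1) ∧
  ∃ M α : ℝ, 0 < M ∧ 0 < α ∧
    ∀ (x₀ : X) (z₀ : Z) (v₀ : W) (v : ℕ → W) (xe : ℕ → X × Z),
      v 0 = v₀ → (∀ n, v (n + 1) = S (v n)) →
      xe 0 = (x₀, z₀) →
      (∀ n, xe (n + 1) = Ae A B C D G₁ G₂ K (xe n) + Be Bd Dd E F G₂ (v n)) →
      ∀ n : ℕ, ‖Ce C D K (xe n) + De Dd E F (v n)‖
        ≤ M * Real.exp (-(α * n)) * (‖x₀‖ + ‖z₀‖ + ‖v₀‖)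

/-- The controller `(G₁, G₂, K)` solves the robust output regulation problem: it solves
the output regulation problem and retains exponential decay of the regulation error for
every perturbation of the operators `(A, B, B_d, C, D, D_d, E, F)` that preserves the
exponential stability of the closed-loop system. -/
def SolvesRORP (A : X →L[ℂ] X) (B : U →L[ℂ] X) (Bd : Ud →L[ℂ] X)
    (C : X →L[ℂ] Y) (D : U →L[ℂ] Y) (Dd : Ud →L[ℂ] Y)
    (S : W →L[ℂ] W) (E : W →L[ℂ] Ud) (F : W →L[ℂ] Y)
    (G₁ : Z →L[ℂ] Z) (G₂ : Y →L[ℂ] Z) (K : Z →L[ℂ] U) : Prop :=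
  SolvesORP A B Bd C D Dd S E F G₁ G₂ K ∧
  ∀ (A' : X →L[ℂ] X) (B' : U →L[ℂ] X) (Bd' : Ud →L[ℂ] X)
    (C' : X →L[ℂ] Y) (D' : U →L[ℂ] Y) (Dd' : Ud →L[ℂ] Y)
    (E' : W →L[ℂ] Ud) (F' : W →L[ℂ] Y),
    (∀ lam ∈ spectrum ℂ (Ae A' B' C' D' G₁ G₂ K), ‖lam‖ < 1) →
    ∃ M α : ℝ, 0 < M ∧ 0 < α ∧
      ∀ (x₀ : X) (z₀ : Z) (v₀ : W) (v : ℕ → W) (xe : ℕ → X × Z),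
        v 0 = v₀ → (∀ n, v (n + 1) = S (v n)) →
        xe 0 = (x₀, z₀) →
        (∀ n, xe (n + 1) = Ae A' B' C' D' G₁ G₂ K (xe n) + Be Bd' Dd' E' F' G₂ (v n)) →
        ∀ n : ℕ, ‖Ce C' D' K (xe n) + De Dd' E' F' (v n)‖
          ≤ M * Real.exp (-(α * n)) * (‖x₀‖ + ‖z₀‖ + ‖v₀‖)


section Aux

open Filter ENNReal


lemma power_decay {A : Type*} [NormedRing A] [NormedAlgebra ℂ A] [CompleteSpace A] (a : A)
    (h : ∀ z ∈ spectrum ℂ a, ‖z‖ < 1) :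
    ∃ M r : ℝ, 0 < M ∧ 0 < r ∧ r < 1 ∧ ∀ n, ‖a ^ n‖ ≤ M * r ^ n := by
  have hrad : spectralRadius ℂ a < 1 := by
    by_cases hσ : (spectrum ℂ a).Nonempty
    · have := spectrum.spectralRadius_lt_of_forall_lt_of_nonempty hσ (r := 1)
        (fun k hk => by have h' := h k hk; rw [← coe_nnnorm] at h'; exact_mod_cast h')
      simpa using this
    · rw [Set.not_nonempty_iff_eq_empty] at hσ
      simp [spectralRadius, hσ]
  obtain ⟨c, hc1, hc2⟩ := exists_between hrad
  have hcne : c ≠ ⊤ := (hc2.trans (by norm_num)).ne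
  have hN := (spectrum.pow_nnnorm_pow_one_div_tendsto_nhds_spectralRadius
    a).eventually_lt_const hc1
  rw [eventually_atTop] at hN
  obtain ⟨N, hN⟩ := hN
  set r : ℝ := max c.toReal (1/2) with hr
  have hr0 : 0 < r := lt_of_lt_of_le (by norm_num) (le_max_right _ _)
  have hr1 : r < 1 := by
    have : c.toReal < 1 := by
      rw [← ENNReal.toReal_one]
      exact ENNReal.toReal_strict_mono (by norm_num) hc2
    exact max_lt this (by norm_num)
  set N₁ := max N 1 with hN₁
  have key : ∀ n, N₁ ≤ n → ‖a ^ n‖ ≤ r ^ n := by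
    intro n hn
    have hnN : N ≤ n := le_trans (le_max_left _ _) hn
    have hn1 : 1 ≤ n := le_trans (le_max_right _ _) hn
    have h1 := hN n hnN
    have h2 : ((‖a ^ n‖₊ : ℝ≥0∞) ^ (1 / (n:ℝ))) ^ (n : ℝ) ≤ c ^ (n : ℝ) :=
      ENNReal.rpow_le_rpow h1.le (Nat.cast_nonneg n)
    rw [← ENNReal.rpow_mul, one_div,
      inv_mul_cancel₀ (Nat.cast_ne_zero.mpr (by omega)),
      ENNReal.rpow_one, ENNReal.rpow_natCast] at h2
    have h3 : (‖a ^ n‖₊ : ℝ≥0∞).toReal ≤ (c ^ n).toReal :=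
      ENNReal.toReal_mono (ENNReal.pow_ne_top hcne) h2
    rw [ENNReal.toReal_pow, ENNReal.coe_toReal, coe_nnnorm] at h3
    calc ‖a ^ n‖ ≤ c.toReal ^ n := h3
      _ ≤ r ^ n := pow_le_pow_left₀ ENNReal.toReal_nonneg (le_max_left _ _) n
  set M : ℝ := 1 + (Finset.range N₁).sum (fun n => ‖a ^ n‖ * (r⁻¹) ^ n) with hM
  have hM1 : 1 ≤ M := by
    have : 0 ≤ (Finset.range N₁).sum (fun n => ‖a ^ n‖ * (r⁻¹) ^ n) :=
      Finset.sum_nonneg fun i _ => mul_nonneg (norm_nonneg _) (pow_nonneg (by positivity) _)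
    rw [hM]; linarith
  refine ⟨M, r, lt_of_lt_of_le one_pos hM1, hr0, hr1, fun n => ?_⟩
  rcases le_or_gt N₁ n with hn | hn
  · calc ‖a ^ n‖ ≤ r ^ n := key n hn
      _ ≤ M * r ^ n := le_mul_of_one_le_left (by positivity) hM1
  · have hterm : ‖a ^ n‖ * (r⁻¹) ^ n ≤ M := by
      rw [hM]
      have := Finset.single_le_sum (f := fun n => ‖a ^ n‖ * (r⁻¹) ^ n)
        (fun i _ => mul_nonneg (norm_nonneg _) (pow_nonneg (by positivity) _))
        (Finset.mem_range.mpr hn)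
      linarith
    have := mul_le_mul_of_nonneg_right hterm (pow_nonneg hr0.le n)
    rwa [mul_assoc, ← mul_pow, inv_mul_cancel₀ hr0.ne', one_pow, mul_one] at this


variable {E F : Type*} [NormedAddCommGroup E] [NormedSpace ℂ E] [CompleteSpace E]
  [NormedAddCommGroup F] [NormedSpace ℂ F] [CompleteSpace F]


lemma ring_inverse_eq {A : Type*} [Ring A] {a b : A} (h : IsUnit a)
    (h1 : a * b = 1) : Ring.inverse a = b := by
  obtain ⟨u, rfl⟩ := h
  rw [Ring.inverse_unit]
  exact Units.inv_eq_of_mul_eq_one_right h1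

lemma neumann (T : E →L[ℂ] E) (z : ℂ) (h : ‖T‖ < ‖z‖) :
    IsUnit (z • (1 : E →L[ℂ] E) - T) ∧
      ‖Ring.inverse (z • (1 : E →L[ℂ] E) - T)‖ ≤ (‖z‖ - ‖T‖)⁻¹ := by
  have hz0 : (0:ℝ) ≤ ‖T‖ := norm_nonneg T
  have hz : z ≠ 0 := by
    intro hz; rw [hz] at h; simp at h; linarith
  set x : E →L[ℂ] E := z⁻¹ • T with hx
  have hxn : ‖x‖ = ‖T‖ / ‖z‖ := by
    rw [hx, norm_smul z⁻¹ T, norm_inv, div_eq_inv_mul]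
  have hx1 : ‖x‖ < 1 := by
    rw [hxn, div_lt_one (lt_of_le_of_lt hz0 h)]; exact h
  have hfact : z • (1 : E →L[ℂ] E) - T = z • ((1 : E →L[ℂ] E) - x) := by
    rw [smul_sub, hx, smul_smul, mul_inv_cancel₀ hz, one_smul]
  have hux : IsUnit ((1 : E →L[ℂ] E) - x) := isUnit_one_sub_of_norm_lt_one hx1
  have hu : IsUnit (z • (1 : E →L[ℂ] E) - T) := by
    rw [hfact, smul_sub]
    rw [← smul_sub]
    have : z • ((1 : E →L[ℂ] E) - x) = (z • (1 : E →L[ℂ] E)) * ((1 : E →L[ℂ] E) - x) := by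
      rw [smul_mul_assoc, one_mul]
    rw [this]
    exact (IsUnit.smul (Units.mk0 z hz) isUnit_one).mul hux
  refine ⟨hu, ?_⟩
  have hinv : Ring.inverse (z • (1 : E →L[ℂ] E) - T)
      = z⁻¹ • Ring.inverse ((1 : E →L[ℂ] E) - x) := by
    apply ring_inverse_eq hu
    rw [hfact, smul_mul_assoc, mul_smul_comm, smul_smul, mul_inv_cancel₀ hz, one_smul,
      Ring.mul_inverse_cancel _ hux]
  rw [hinv, norm_smul z⁻¹ (Ring.inverse ((1 : E →L[ℂ] E) - x)), norm_inv]
  have hb : ‖Ring.inverse ((1 : E →L[ℂ] E) - x)‖ ≤ (1 - ‖x‖)⁻¹ := by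
    rw [← geom_series_eq_inverse x hx1]
    refine le_trans (tsum_geometric_le_of_norm_lt_one x hx1) ?_
    have h1 : ‖(1 : E →L[ℂ] E)‖ ≤ 1 := ContinuousLinearMap.norm_id_le
    linarith
  calc ‖z‖⁻¹ * ‖Ring.inverse ((1 : E →L[ℂ] E) - x)‖ ≤ ‖z‖⁻¹ * (1 - ‖x‖)⁻¹ := by
        apply mul_le_mul_of_nonneg_left hb (by positivity)
    _ = (‖z‖ - ‖T‖)⁻¹ := by
        rw [← mul_inv]
        congr 1
        rw [hxn]
        have hzpos : (0:ℝ) < ‖z‖ := lt_of_le_of_lt hz0 h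
        rw [mul_sub, mul_one, mul_div_cancel₀ _ (ne_of_gt hzpos)]



lemma resolvent_continuousAt (T : E →L[ℂ] E) {z₀ : ℂ}
    (h : IsUnit (z₀ • (1 : E →L[ℂ] E) - T)) :
    ContinuousAt (fun z : ℂ => Ring.inverse (z • (1 : E →L[ℂ] E) - T)) z₀ := by
  have hc : Continuous (fun z : ℂ => z • (1 : E →L[ℂ] E) - T) :=
    (continuous_id.smul continuous_const).sub continuous_const
  exact ContinuousAt.comp (h.unit_spec ▸ NormedRing.inverse_continuousAt h.unit)
    hc.continuousAt

lemma resolvent_bound (T : E →L[ℂ] E) (S : Set ℂ) (hS : IsClosed S)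
    (hU : ∀ z ∈ S, IsUnit (z • (1 : E →L[ℂ] E) - T)) :
    ∃ m : ℝ, 1 ≤ m ∧ ∀ z ∈ S, ‖Ring.inverse (z • (1 : E →L[ℂ] E) - T)‖ ≤ m := by
  set K := S ∩ Metric.closedBall (0:ℂ) (‖T‖+1) with hKdef
  have hK : IsCompact K := (isCompact_closedBall (0:ℂ) (‖T‖+1)).inter_left hS
  have hcont : ContinuousOn (fun z : ℂ => Ring.inverse (z • (1 : E →L[ℂ] E) - T)) K :=
    fun z hz => (resolvent_continuousAt T (hU z hz.1)).continuousWithinAt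
  obtain ⟨m₁, hm₁⟩ := hK.exists_bound_of_continuousOn hcont
  refine ⟨max m₁ 1, le_max_right _ _, fun z hz => ?_⟩
  by_cases hzb : z ∈ Metric.closedBall (0:ℂ) (‖T‖+1)
  · exact le_trans (hm₁ z ⟨hz, hzb⟩) (le_max_left _ _)
  · have hz2 : ‖T‖ + 1 < ‖z‖ := by
      rwa [Metric.mem_closedBall, dist_zero_right, not_le] at hzb
    have h2 := (neumann T z (by linarith)).2
    refine le_trans h2 (le_trans ?_ (le_max_right _ _))
    have h3 : (1:ℝ) ≤ ‖z‖ - ‖T‖ := by linarith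
    exact inv_le_one_of_one_le₀ h3


set_option linter.unusedSectionVars false in
/-- Block operator on a product space. -/

noncomputable def blk (P : E →L[ℂ] E) (Q : F →L[ℂ] E) (R : E →L[ℂ] F) (S : F →L[ℂ] F) :
    (E × F) →L[ℂ] (E × F) :=
  (P.comp (fst ℂ E F) + Q.comp (snd ℂ E F)).prod
    (R.comp (fst ℂ E F) + S.comp (snd ℂ E F))

lemma blk_apply (P : E →L[ℂ] E) (Q : F →L[ℂ] E) (R : E →L[ℂ] F) (S : F →L[ℂ] F)
    (w : E × F) : blk P Q R S w = (P w.1 + Q w.2, R w.1 + S w.2) := by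
  simp [blk]

lemma blk_isUnit (P : E →L[ℂ] E) (Q : F →L[ℂ] E) (R : E →L[ℂ] F) (S : F →L[ℂ] F)
    (hP : IsUnit P)
    (hT : IsUnit (S - R.comp ((Ring.inverse P).comp Q))) :
    IsUnit (blk P Q R S) := by
  set p := Ring.inverse P with hp
  set T := S - R.comp (p.comp Q) with hTdef
  set t := Ring.inverse T with ht
  have hPp' : ∀ w, P (p w) = w := by
    intro w
    have := Ring.mul_inverse_cancel P hP
    calc P (p w) = (P * p) w := rfl
      _ = w := by rw [this]; rfl
  have hpP' : ∀ w, p (P w) = w := by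
    intro w
    have := Ring.inverse_mul_cancel P hP
    calc p (P w) = (p * P) w := rfl
      _ = w := by rw [this]; rfl
  have hTt' : ∀ w, T (t w) = w := by
    intro w
    have := Ring.mul_inverse_cancel T hT
    calc T (t w) = (T * t) w := rfl
      _ = w := by rw [this]; rfl
  have htT' : ∀ w, t (T w) = w := by
    intro w
    have := Ring.inverse_mul_cancel T hT
    calc t (T w) = (t * T) w := rfl
      _ = w := by rw [this]; rfl
  have hS : ∀ w, S (t w) = w + R (p (Q (t w))) := by
    intro w
    have h1 := hTt' w
    rw [hTdef] at h1
    simp only [sub_apply, comp_apply] at h1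
    linear_combination (norm := module) h1
  have htS : ∀ w, t (S w) = w + t (R (p (Q w))) := by
    intro w
    have h1 := htT' w
    rw [hTdef] at h1
    simp only [sub_apply, comp_apply, map_sub] at h1
    linear_combination (norm := module) h1
  set N := blk (p + ((p.comp Q).comp (t.comp (R.comp p)))) (-((p.comp Q).comp t))
    (-(t.comp (R.comp p))) t with hN
  have h1 : blk P Q R S * N = 1 := by
    refine ContinuousLinearMap.ext fun w => Prod.ext ?_ ?_
    · simp only [ContinuousLinearMap.mul_apply, hN, blk_apply, ContinuousLinearMap.one_apply,
          ContinuousLinearMap.add_apply, ContinuousLinearMap.neg_apply, ContinuousLinearMap.comp_apply,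
        map_add, map_neg, hPp', hpP', hS, htS]
      abel
    · simp only [ContinuousLinearMap.mul_apply, hN, blk_apply, ContinuousLinearMap.one_apply,
          ContinuousLinearMap.add_apply, ContinuousLinearMap.neg_apply, ContinuousLinearMap.comp_apply,
        map_add, map_neg, hPp', hpP', hS, htS]
      abel
  have h2 : N * blk P Q R S = 1 := by
    refine ContinuousLinearMap.ext fun w => Prod.ext ?_ ?_
    · simp only [ContinuousLinearMap.mul_apply, hN, blk_apply, ContinuousLinearMap.one_apply,
          ContinuousLinearMap.add_apply, ContinuousLinearMap.neg_apply, ContinuousLinearMap.comp_apply,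
        map_add, map_neg, hPp', hpP', hS, htS]
      abel
    · simp only [ContinuousLinearMap.mul_apply, hN, blk_apply, ContinuousLinearMap.one_apply,
          ContinuousLinearMap.add_apply, ContinuousLinearMap.neg_apply, ContinuousLinearMap.comp_apply,
        map_add, map_neg, hPp', hpP', hS, htS]
      abel
  exact ⟨⟨blk P Q R S, N, h1, h2⟩, rfl⟩


end Aux

set_option maxHeartbeats 1000000 in
lemma regulation {X Z U Ud Y : Type*}
    [NormedAddCommGroup X] [NormedSpace ℂ X] [CompleteSpace X]
    [NormedAddCommGroup Z] [NormedSpace ℂ Z] [CompleteSpace Z]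
    [NormedAddCommGroup U] [NormedSpace ℂ U]
    [NormedAddCommGroup Ud] [NormedSpace ℂ Ud]
    [NormedAddCommGroup Y] [NormedSpace ℂ Y]
    (A : X →L[ℂ] X) (B : U →L[ℂ] X) (Bd : Ud →L[ℂ] X)
    (C : X →L[ℂ] Y) (D : U →L[ℂ] Y) (Dd : Ud →L[ℂ] Y)
    (E : ℂ →L[ℂ] Ud) (F : ℂ →L[ℂ] Y)
    (G₂ : Y ≃L[ℂ] Z) (K : Z →L[ℂ] U)
    (hcl : ∀ lam ∈ spectrum ℂ (Ae A B C D (1 : Z →L[ℂ] Z) (G₂ : Y →L[ℂ] Z) K), ‖lam‖ < 1) :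
    ∃ M α : ℝ, 0 < M ∧ 0 < α ∧
      ∀ (x₀ : X) (z₀ : Z) (v₀ : ℂ) (v : ℕ → ℂ) (xe : ℕ → X × Z),
        v 0 = v₀ → (∀ n, v (n + 1) = (1 : ℂ →L[ℂ] ℂ) (v n)) →
        xe 0 = (x₀, z₀) →
        (∀ n, xe (n + 1) = Ae A B C D (1 : Z →L[ℂ] Z) (G₂ : Y →L[ℂ] Z) K (xe n)
          + Be Bd Dd E F (G₂ : Y →L[ℂ] Z) (v n)) →
        ∀ n : ℕ, ‖Ce C D K (xe n) + De Dd E F (v n)‖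
          ≤ M * Real.exp (-(α * n)) * (‖x₀‖ + ‖z₀‖ + ‖v₀‖) := by
  set T := Ae A B C D (1 : Z →L[ℂ] Z) (G₂ : Y →L[ℂ] Z) K with hT
  set Bop := Be Bd Dd E F (G₂ : Y →L[ℂ] Z) with hB
  obtain ⟨M₀, r, hM₀, hr0, hr1, hpow⟩ := power_decay T hcl
  have h1 : (1:ℂ) ∉ spectrum ℂ T := fun h => absurd (hcl 1 h) (by norm_num)
  have hU : IsUnit (1 - T) := by
    have := spectrum.notMem_iff.mp h1
    rwa [map_one] at this
  set u := hU.unit with hu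
  set Cn := ‖Ce C D K‖ with hCn
  set Bn := ‖((↑u⁻¹ : (X × Z) →L[ℂ] (X × Z))).comp Bop‖ with hBn
  have hCn0 : 0 ≤ Cn := norm_nonneg _
  have hBn0 : 0 ≤ Bn := norm_nonneg _
  refine ⟨(Cn + 1) * M₀ * (Bn + 1), -Real.log r, by positivity, by
      have := Real.log_neg hr0 hr1; linarith, ?_⟩
  intro x₀ z₀ v₀ v xe hv0 hvrec hxe0 hxerec n
  have hexp : Real.exp (-(-Real.log r * n)) = r ^ n := by
    rw [neg_mul, neg_neg, mul_comm, Real.exp_nat_mul, Real.exp_log hr0]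
  have hv : ∀ m, v m = v₀ := by
    intro m
    induction m with
    | zero => exact hv0
    | succ k ih => rw [hvrec k, ContinuousLinearMap.one_apply, ih]
  set xinf : X × Z := (↑u⁻¹ : (X × Z) →L[ℂ] (X × Z)) (Bop v₀) with hxinf
  have hfix : T xinf + Bop v₀ = xinf := by
    have h2 : (1 - T) xinf = Bop v₀ := by
      rw [hxinf]
      calc (1 - T) ((↑u⁻¹ : (X × Z) →L[ℂ] (X × Z)) (Bop v₀))
          = ((1 - T) * (↑u⁻¹ : (X × Z) →L[ℂ] (X × Z))) (Bop v₀) := rfl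
        _ = Bop v₀ := by rw [← hU.unit_spec, u.mul_inv, ContinuousLinearMap.one_apply]
    simp only [ContinuousLinearMap.sub_apply, ContinuousLinearMap.one_apply] at h2
    rw [← h2]; abel
  have hsnd := congrArg Prod.snd hfix
  have herr0 : Ce C D K xinf + De Dd E F v₀ = 0 := by
    have h3 : (G₂ : Y →L[ℂ] Z) (Ce C D K xinf + De Dd E F v₀) = 0 := by
      simp only [hT, hB, Ae, Be, Ce, De, ContinuousLinearMap.prod_apply,
        ContinuousLinearMap.add_apply, ContinuousLinearMap.comp_apply,
        ContinuousLinearMap.coe_fst', ContinuousLinearMap.coe_snd',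
        ContinuousLinearMap.one_apply, Prod.snd_add, map_add] at hsnd ⊢
      linear_combination (norm := module) hsnd
    have h4 := (G₂ : Y ≃L[ℂ] Z).map_eq_zero_iff.mp (by
      rw [← ContinuousLinearEquiv.coe_coe G₂]; exact h3)
    exact h4
  have hdiff : ∀ m, xe m - xinf = (T ^ m) (xe 0 - xinf) := by
    intro m
    induction m with
    | zero => rw [pow_zero, ContinuousLinearMap.one_apply]
    | succ k ih =>
      have step : xe (k+1) - xinf = T (xe k - xinf) := by
        rw [hxerec k, hv k]
        conv_lhs => rw [← hfix]
        rw [map_sub]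
        abel
      rw [step, ih, pow_succ', ContinuousLinearMap.mul_apply]
  have hstate : ‖xe 0 - xinf‖ ≤ ‖x₀‖ + ‖z₀‖ + Bn * ‖v₀‖ := by
    have h5 : ‖xe 0‖ ≤ ‖x₀‖ + ‖z₀‖ := by
      rw [hxe0, Prod.norm_def]
      exact max_le (by simp [le_add_of_nonneg_right, norm_nonneg])
        (by simp [le_add_of_nonneg_left, norm_nonneg])
    have h6 : ‖xinf‖ ≤ Bn * ‖v₀‖ := by
      rw [hxinf, ← ContinuousLinearMap.comp_apply]
      exact ContinuousLinearMap.le_opNorm _ _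
    calc ‖xe 0 - xinf‖ ≤ ‖xe 0‖ + ‖xinf‖ := norm_sub_le _ _
      _ ≤ ‖x₀‖ + ‖z₀‖ + Bn * ‖v₀‖ := by linarith
  have herr : Ce C D K (xe n) + De Dd E F (v n) = Ce C D K (xe n - xinf) := by
    rw [hv n, map_sub]
    have := herr0
    linear_combination (norm := module) this
  rw [herr, hexp]
  calc ‖Ce C D K (xe n - xinf)‖ ≤ Cn * ‖xe n - xinf‖ :=
      ContinuousLinearMap.le_opNorm _ _
    _ = Cn * ‖(T ^ n) (xe 0 - xinf)‖ := by rw [hdiff n]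
    _ ≤ Cn * (‖T ^ n‖ * ‖xe 0 - xinf‖) :=
      mul_le_mul_of_nonneg_left (ContinuousLinearMap.le_opNorm _ _) hCn0
    _ ≤ Cn * ((M₀ * r ^ n) * (‖x₀‖ + ‖z₀‖ + Bn * ‖v₀‖)) := by
      apply mul_le_mul_of_nonneg_left _ hCn0
      apply mul_le_mul (hpow n) hstate (norm_nonneg _) (by positivity)
    _ ≤ (Cn + 1) * M₀ * (Bn + 1) * r ^ n * (‖x₀‖ + ‖z₀‖ + ‖v₀‖) := by
      have hs1 : (0:ℝ) ≤ ‖x₀‖ := norm_nonneg _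
      have hs2 : (0:ℝ) ≤ ‖z₀‖ := norm_nonneg _
      have hs3 : (0:ℝ) ≤ ‖v₀‖ := norm_nonneg _
      have hrn : (0:ℝ) < r ^ n := by positivity
      have key : Cn * (‖x₀‖ + ‖z₀‖ + Bn * ‖v₀‖)
          ≤ (Cn + 1) * (Bn + 1) * (‖x₀‖ + ‖z₀‖ + ‖v₀‖) := by
        nlinarith [mul_nonneg hCn0 hBn0, mul_nonneg hBn0 hs1, mul_nonneg hBn0 hs2,
          mul_nonneg hCn0 hs3, mul_nonneg hBn0 hs3, mul_nonneg hCn0 hs1,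
          mul_nonneg hCn0 hs2, mul_nonneg (mul_nonneg hCn0 hBn0) hs1,
          mul_nonneg (mul_nonneg hCn0 hBn0) hs2, mul_nonneg (mul_nonneg hCn0 hBn0) hs3]
      have := mul_le_mul_of_nonneg_right key (le_of_lt (mul_pos hM₀ hrn))
      calc Cn * (M₀ * r ^ n * (‖x₀‖ + ‖z₀‖ + Bn * ‖v₀‖))
          = Cn * (‖x₀‖ + ‖z₀‖ + Bn * ‖v₀‖) * (M₀ * r ^ n) := by ring
        _ ≤ (Cn + 1) * (Bn + 1) * (‖x₀‖ + ‖z₀‖ + ‖v₀‖) * (M₀ * r ^ n) := this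
        _ = (Cn + 1) * M₀ * (Bn + 1) * r ^ n * (‖x₀‖ + ‖z₀‖ + ‖v₀‖) := by ring


set_option maxHeartbeats 1000000 in
lemma stability {X Z U Y : Type*}
    [NormedAddCommGroup X] [NormedSpace ℂ X] [CompleteSpace X]
    [NormedAddCommGroup Z] [NormedSpace ℂ Z] [CompleteSpace Z]
    [NormedAddCommGroup U] [NormedSpace ℂ U]
    [NormedAddCommGroup Y] [NormedSpace ℂ Y]
    (A : X →L[ℂ] X) (B : U →L[ℂ] X) (C : X →L[ℂ] Y) (D : U →L[ℂ] Y)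
    (hstab : ∀ lam ∈ spectrum ℂ A, ‖lam‖ < 1)
    (G₂ : Y →L[ℂ] Z) (K₀ : Z →L[ℂ] U)
    (hspec : ∀ lam ∈ spectrum ℂ
        (G₂.comp ((C.comp ((Ring.inverse ((1 : X →L[ℂ] X) - A)).comp B) + D).comp K₀)),
      lam.re < 0) :
    ∃ εstar : ℝ, 0 < εstar ∧ ∀ ε : ℝ, 0 < ε → ε ≤ εstar →
      ∀ lam ∈ spectrum ℂ (Ae A B C D (1 : Z →L[ℂ] Z) G₂ ((ε : ℂ) • K₀)), ‖lam‖ < 1 := by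
  classical
  -- resolvent of A outside the open unit disc
  have hAunit : ∀ lam : ℂ, 1 ≤ ‖lam‖ → IsUnit (lam • (1 : X →L[ℂ] X) - A) := by
    intro lam hlam
    by_contra h
    have hmem : lam ∈ spectrum ℂ A := by
      rw [spectrum.mem_iff, Algebra.algebraMap_eq_smul_one]
      exact h
    linarith [hstab lam hmem]
  obtain ⟨mA, hmA1, hmA⟩ := resolvent_bound A {z : ℂ | 1 ≤ ‖z‖}
    (isClosed_le continuous_const continuous_norm) (fun z hz => hAunit z hz)
  set Rz : ℂ → (X →L[ℂ] X) := fun z => Ring.inverse (z • (1 : X →L[ℂ] X) - A) with hRz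
  set Q : ℂ → (Z →L[ℂ] Z) :=
    fun z => G₂.comp ((C.comp ((Rz z).comp B) + D).comp K₀) with hQ
  set Q₁ : Z →L[ℂ] Z :=
    G₂.comp ((C.comp ((Ring.inverse ((1 : X →L[ℂ] X) - A)).comp B) + D).comp K₀) with hQ₁
  have hQ1 : Q 1 = Q₁ := by rw [hQ, hQ₁, hRz]; norm_num
  -- bound for Q on the closed exterior:
  set LQ : ℝ := ‖G₂‖ * ((‖C‖ * (mA * ‖B‖) + ‖D‖) * ‖K₀‖) with hLQ
  have hLQ0 : 0 ≤ LQ := by positivity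
  have hQbound : ∀ z : ℂ, 1 ≤ ‖z‖ → ‖Q z‖ ≤ LQ := by
    intro z hz
    have h1 : ‖C.comp ((Rz z).comp B) + D‖ ≤ ‖C‖ * (mA * ‖B‖) + ‖D‖ := by
      refine le_trans (norm_add_le _ _) ?_
      have h2 : ‖C.comp ((Rz z).comp B)‖ ≤ ‖C‖ * (mA * ‖B‖) := by
        refine le_trans (ContinuousLinearMap.opNorm_comp_le _ _) ?_
        have h3 : ‖(Rz z).comp B‖ ≤ mA * ‖B‖ := by
          refine le_trans (ContinuousLinearMap.opNorm_comp_le _ _) ?_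
          exact mul_le_mul_of_nonneg_right (hmA z hz) (norm_nonneg _)
        exact mul_le_mul_of_nonneg_left h3 (norm_nonneg _)
      linarith
    calc ‖Q z‖ ≤ ‖G₂‖ * ‖(C.comp ((Rz z).comp B) + D).comp K₀‖ :=
        ContinuousLinearMap.opNorm_comp_le _ _
      _ ≤ ‖G₂‖ * ((‖C‖ * (mA * ‖B‖) + ‖D‖) * ‖K₀‖) := by
        refine mul_le_mul_of_nonneg_left ?_ (norm_nonneg _)
        refine le_trans (ContinuousLinearMap.opNorm_comp_le _ _) ?_
        exact mul_le_mul_of_nonneg_right h1 (norm_nonneg _)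
  -- spectral gap for Q₁
  obtain ⟨a, ha0, haspec⟩ : ∃ a : ℝ, 0 < a ∧ ∀ z ∈ spectrum ℂ Q₁, z.re ≤ -(2*a) := by
    by_cases hne : (spectrum ℂ Q₁).Nonempty
    · obtain ⟨z₀, hz₀, hmax⟩ := (spectrum.isCompact Q₁).exists_isMaxOn hne
        (Complex.continuous_re.continuousOn)
      refine ⟨-z₀.re/2, by have := hspec z₀ hz₀; linarith, fun z hz => ?_⟩
      have := hmax hz
      simp only [Set.mem_setOf_eq] at this
      linarith
    · exact ⟨1, one_pos, fun z hz => absurd ⟨z, hz⟩ hne⟩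
  have hQ₁unit : ∀ z : ℂ, -a ≤ z.re → IsUnit (z • (1 : Z →L[ℂ] Z) - Q₁) := by
    intro z hz
    by_contra h
    have hmem : z ∈ spectrum ℂ Q₁ := by
      rw [spectrum.mem_iff, Algebra.algebraMap_eq_smul_one]
      exact h
    have := haspec z hmem
    linarith
  obtain ⟨m, hm1, hm⟩ := resolvent_bound Q₁ {z : ℂ | -a ≤ z.re}
    (isClosed_le continuous_const Complex.continuous_re) (fun z hz => hQ₁unit z hz)
  have hm0 : (0:ℝ) < m := lt_of_lt_of_le one_pos hm1
  -- continuity of the resolvent at 1 gives δ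
  have hcont : ContinuousAt Rz 1 := resolvent_continuousAt A (hAunit 1 (by norm_num))
  set cQ : ℝ := ‖G₂‖ * ((‖C‖ * ‖B‖) * ‖K₀‖) with hcQ
  have hcQ0 : 0 ≤ cQ := by positivity
  have hQdiff : ∀ z w : ℂ, ‖Q z - Q w‖ ≤ cQ * ‖Rz z - Rz w‖ := by
    intro z w
    have hEq : Q z - Q w = G₂.comp ((C.comp ((Rz z - Rz w).comp B)).comp K₀) := by
      refine ContinuousLinearMap.ext fun y => ?_
      simp only [hQ, ContinuousLinearMap.sub_apply, ContinuousLinearMap.comp_apply,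
        ContinuousLinearMap.add_apply, map_sub, map_add]
      abel
    rw [hEq]
    calc ‖G₂.comp ((C.comp ((Rz z - Rz w).comp B)).comp K₀)‖
        ≤ ‖G₂‖ * (‖C.comp ((Rz z - Rz w).comp B)‖ * ‖K₀‖) := by
          refine le_trans (ContinuousLinearMap.opNorm_comp_le _ _) ?_
          exact mul_le_mul_of_nonneg_left (ContinuousLinearMap.opNorm_comp_le _ _)
            (norm_nonneg _)
      _ ≤ ‖G₂‖ * (((‖C‖ * (‖Rz z - Rz w‖ * ‖B‖))) * ‖K₀‖) := by
          refine mul_le_mul_of_nonneg_left ?_ (norm_nonneg _)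
          refine mul_le_mul_of_nonneg_right ?_ (norm_nonneg _)
          refine le_trans (ContinuousLinearMap.opNorm_comp_le _ _) ?_
          exact mul_le_mul_of_nonneg_left (ContinuousLinearMap.opNorm_comp_le _ _)
            (norm_nonneg _)
      _ = cQ * ‖Rz z - Rz w‖ := by rw [hcQ]; ring
  obtain ⟨δ₀, hδ₀0, hδ₀⟩ := Metric.continuousAt_iff.mp hcont
    ((2*m)⁻¹ / (cQ + 1)) (by positivity)
  set δ : ℝ := δ₀ / 2 with hδdef
  have hδ0 : 0 < δ := by positivity
  have hδ : ∀ z : ℂ, ‖z - 1‖ ≤ δ → ‖Q z - Q₁‖ ≤ (2*m)⁻¹ := by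
    intro z hz
    have h1 : dist z 1 < δ₀ := by
      rw [dist_eq_norm]
      calc ‖z - 1‖ = ‖z - 1‖ := rfl
        _ ≤ δ := hz
        _ < δ₀ := by rw [hδdef]; linarith
    have h2 := hδ₀ h1
    rw [dist_eq_norm] at h2
    rw [← hQ1]
    calc ‖Q z - Q 1‖ ≤ cQ * ‖Rz z - Rz 1‖ := hQdiff z 1
      _ ≤ cQ * ((2*m)⁻¹ / (cQ + 1)) := mul_le_mul_of_nonneg_left h2.le hcQ0
      _ ≤ (2*m)⁻¹ := by
          rw [div_eq_mul_inv]
          have h3 : cQ * ((2*m)⁻¹ * (cQ+1)⁻¹) = (2*m)⁻¹ * (cQ * (cQ+1)⁻¹) := by ring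
          rw [h3]
          have h4 : cQ * (cQ+1)⁻¹ ≤ 1 := by
            rw [← div_eq_mul_inv]
            exact (div_le_one (by positivity)).mpr (by linarith)
          nlinarith [inv_nonneg.mpr (le_of_lt (by positivity : (0:ℝ) < 2*m))]
  -- the smallness threshold
  set εstar : ℝ := min (min (δ^2/(2*a)) (a/(LQ^2+1))) (δ/(LQ+1)) with hεstar
  have hεstar0 : 0 < εstar := by
    apply lt_min (lt_min (by positivity) (by positivity)) (by positivity)
  refine ⟨εstar, hεstar0, ?_⟩
  intro ε hε0 hεle lam hlam
  by_contra hcon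
  push_neg at hcon
  -- key claim: lam - Ae is invertible
  have hεne : (ε:ℂ) ≠ 0 := by exact_mod_cast ne_of_gt hε0
  set μ : ℂ := lam - 1 with hμ
  have hre : -Complex.normSq μ ≤ 2 * μ.re := by
    have h1 : 1 ≤ ‖lam‖^2 := by nlinarith [hcon, norm_nonneg lam]
    have h2 : ‖lam‖^2 = Complex.normSq lam := Complex.sq_norm lam
    have h3 : lam = 1 + μ := by rw [hμ]; ring
    rw [h2, h3] at h1
    simp only [Complex.normSq_apply, Complex.add_re, Complex.add_im, Complex.one_re,
      Complex.one_im] at h1 ⊢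
    nlinarith
  -- claim: (lam-1)•1 - ε • Q lam is a unit
  have claimZ : IsUnit (μ • (1 : Z →L[ℂ] Z) - (ε:ℂ) • Q lam) := by
    by_cases hsmall : Complex.normSq μ ≤ 2*a*ε
    · -- small case
      set zc : ℂ := μ / (ε:ℂ) with hzc
      have hzre : -a ≤ zc.re := by
        have h1 : zc.re = μ.re / ε := by rw [hzc, Complex.div_ofReal_re]
        rw [h1, le_div_iff₀ hε0]
        nlinarith
      have hu1 : IsUnit (zc • (1 : Z →L[ℂ] Z) - Q₁) := hQ₁unit zc hzre
      have hw := hm zc hzre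
      set w : Z →L[ℂ] Z := Ring.inverse (zc • (1 : Z →L[ℂ] Z) - Q₁) with hwdef
      have hμδ : ‖μ‖ ≤ δ := by
        have h1 : ‖μ‖^2 = Complex.normSq μ := Complex.sq_norm μ
        have h2 : ‖μ‖^2 ≤ δ^2 := by
          rw [h1]
          have h3 : ε ≤ δ^2/(2*a) := le_trans hεle (le_trans (min_le_left _ _)
            (min_le_left _ _))
          have h4 := (le_div_iff₀ (by positivity : (0:ℝ) < 2*a)).mp h3
          nlinarith
        by_contra hc
        push_neg at hc
        nlinarith [norm_nonneg μ]
      have hΔ : ‖Q lam - Q₁‖ ≤ (2*m)⁻¹ := by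
        apply hδ lam
        rw [← hμ]; exact hμδ
      have hwΔ : ‖w * (Q lam - Q₁)‖ < 1 := by
        calc ‖w * (Q lam - Q₁)‖ ≤ ‖w‖ * ‖Q lam - Q₁‖ := norm_mul_le _ _
          _ ≤ m * (2*m)⁻¹ := by
              apply mul_le_mul hw hΔ (norm_nonneg _) (le_of_lt hm0)
          _ = 2⁻¹ := by field_simp
          _ < 1 := by norm_num
      have hu2 : IsUnit (1 - w * (Q lam - Q₁)) := by
        have := isUnit_one_sub_of_norm_lt_one hwΔ
        exact this
      have hfact : zc • (1 : Z →L[ℂ] Z) - Q lam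
          = (zc • (1 : Z →L[ℂ] Z) - Q₁) * (1 - w * (Q lam - Q₁)) := by
        have h5 : (zc • (1 : Z →L[ℂ] Z) - Q₁) * w = 1 := Ring.mul_inverse_cancel _ hu1
        rw [mul_sub, mul_one, ← mul_assoc, h5, one_mul]
        abel
      have hu3 : IsUnit (zc • (1 : Z →L[ℂ] Z) - Q lam) := by
        rw [hfact]; exact hu1.mul hu2
      have hsc : μ • (1 : Z →L[ℂ] Z) - (ε:ℂ) • Q lam
          = (ε:ℂ) • (zc • (1 : Z →L[ℂ] Z) - Q lam) := by
        rw [smul_sub, smul_smul, hzc]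
        congr 2
        field_simp
      rw [hsc]
      exact hu3.smul (Units.mk0 (ε:ℂ) hεne)
    · push_neg at hsmall
      have hnative : ‖μ‖^2 = Complex.normSq μ := Complex.sq_norm μ
      by_cases hmid : ‖μ‖ ≤ δ
      · -- medium case
        have hQb := hQbound lam hcon
        have hcomp : ‖(ε:ℂ) • Q lam‖ = ε * ‖Q lam‖ := by
          rw [norm_smul ((ε:ℂ)) (Q lam), Complex.norm_real, Real.norm_eq_abs,
            abs_of_pos hε0]
        have hεa : ε * LQ^2 ≤ a := by
          have h3 : ε ≤ a/(LQ^2+1) := le_trans hεle (le_trans (min_le_left _ _)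
            (min_le_right _ _))
          have h4 : ε * (LQ^2+1) ≤ a := (le_div_iff₀ (by positivity)).mp h3
          nlinarith
        have hlt : ‖(ε:ℂ) • Q lam‖ < ‖μ‖ := by
          rw [hcomp]
          have h5 : (ε * ‖Q lam‖)^2 < ‖μ‖^2 := by
            have h6 : (ε * ‖Q lam‖)^2 ≤ (ε * LQ)^2 := by
              have := mul_le_mul_of_nonneg_left hQb (le_of_lt hε0)
              nlinarith [norm_nonneg (Q lam), mul_nonneg (le_of_lt hε0) (norm_nonneg (Q lam))]
            have h7 : (ε * LQ)^2 = ε * (ε * LQ^2) := by ring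
            have h8 : ε * (ε * LQ^2) ≤ ε * a := mul_le_mul_of_nonneg_left hεa (le_of_lt hε0)
            rw [hnative]
            nlinarith
          nlinarith [norm_nonneg μ, mul_nonneg (le_of_lt hε0) (norm_nonneg (Q lam))]
        exact (neumann ((ε:ℂ) • Q lam) μ hlt).1
      · -- far case
        push_neg at hmid
        have hQb := hQbound lam hcon
        have hcomp : ‖(ε:ℂ) • Q lam‖ = ε * ‖Q lam‖ := by
          rw [norm_smul ((ε:ℂ)) (Q lam), Complex.norm_real, Real.norm_eq_abs,
            abs_of_pos hε0]
        have hεδ : ε * (LQ+1) ≤ δ := by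
          have h3 : ε ≤ δ/(LQ+1) := le_trans hεle (min_le_right _ _)
          rw [le_div_iff₀ (by positivity : (0:ℝ) < LQ+1)] at h3
          linarith
        have hlt : ‖(ε:ℂ) • Q lam‖ < ‖μ‖ := by
          rw [hcomp]
          calc ε * ‖Q lam‖ ≤ ε * LQ := mul_le_mul_of_nonneg_left hQb (le_of_lt hε0)
            _ < ε * (LQ + 1) := by nlinarith
            _ ≤ δ := hεδ
            _ < ‖μ‖ := hmid
        exact (neumann ((ε:ℂ) • Q lam) μ hlt).1
  -- assemble block invertibility
  have hblk : lam • (1 : (X × Z) →L[ℂ] (X × Z)) - Ae A B C D (1 : Z →L[ℂ] Z) G₂ ((ε:ℂ) • K₀)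
      = blk (lam • (1 : X →L[ℂ] X) - A) (-(B.comp ((ε:ℂ) • K₀))) (-(G₂.comp C))
        (lam • (1 : Z →L[ℂ] Z) - (1 + G₂.comp (D.comp ((ε:ℂ) • K₀)))) := by
    refine ContinuousLinearMap.ext fun p => Prod.ext ?_ ?_ <;>
      simp [Ae, blk, sub_apply, add_apply, smul_apply] <;> abel
  have hschur : (lam • (1 : Z →L[ℂ] Z) - (1 + G₂.comp (D.comp ((ε:ℂ) • K₀))))
      - (-(G₂.comp C)).comp ((Ring.inverse (lam • (1 : X →L[ℂ] X) - A)).comp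
          (-(B.comp ((ε:ℂ) • K₀))))
      = μ • (1 : Z →L[ℂ] Z) - (ε:ℂ) • Q lam := by
    refine ContinuousLinearMap.ext fun y => ?_
    simp only [hQ, hRz, hμ, ContinuousLinearMap.sub_apply, ContinuousLinearMap.add_apply,
      ContinuousLinearMap.comp_apply, ContinuousLinearMap.neg_apply,
      ContinuousLinearMap.smul_apply, ContinuousLinearMap.one_apply, map_neg, map_smul,
      map_add, sub_smul, one_smul]
    module
  have hunit : IsUnit (lam • (1 : (X × Z) →L[ℂ] (X × Z))
      - Ae A B C D (1 : Z →L[ℂ] Z) G₂ ((ε:ℂ) • K₀)) := by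
    rw [hblk]
    refine blk_isUnit _ _ _ _ (hAunit lam hcon) ?_
    rw [hschur]
    exact claimZ
  have hnm : lam ∉ spectrum ℂ (Ae A B C D (1 : Z →L[ℂ] Z) G₂ ((ε:ℂ) • K₀)) := by
    rw [spectrum.notMem_iff, Algebra.algebraMap_eq_smul_one]
    exact hunit
  exact hnm hlam


/-- for an exponentially stable system with one-dimensional exosystem
(`q = 1`, `S = 1`) and surjective `P(1)`, the controller `(I_Z, G₂, ε K₀)` with `G₂`
boundedly invertible and `σ(G₂P(1)K₀) ⊂ ℂ₋` solves the robust output regulation problem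
for all sufficiently small `ε > 0`. -/
theorem low_gain_controller_solves_rorp
    {X Z U Ud Y : Type*}
    [NormedAddCommGroup X] [NormedSpace ℂ X] [CompleteSpace X]
    [NormedAddCommGroup Z] [InnerProductSpace ℂ Z] [CompleteSpace Z]
    [NormedAddCommGroup U] [InnerProductSpace ℂ U] [CompleteSpace U]
    [NormedAddCommGroup Ud] [InnerProductSpace ℂ Ud] [CompleteSpace Ud]
    [NormedAddCommGroup Y] [InnerProductSpace ℂ Y] [CompleteSpace Y]
    (A : X →L[ℂ] X) (B : U →L[ℂ] X) (Bd : Ud →L[ℂ] X)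
    (C : X →L[ℂ] Y) (D : U →L[ℂ] Y) (Dd : Ud →L[ℂ] Y)
    (hstab : ∀ lam ∈ spectrum ℂ A, ‖lam‖ < 1)
    (E : ℂ →L[ℂ] Ud) (F : ℂ →L[ℂ] Y)
    (hsurj : Function.Surjective
      ⇑(C.comp ((Ring.inverse ((1 : X →L[ℂ] X) - A)).comp B) + D))
    (G₂ : Y ≃L[ℂ] Z) (K₀ : Z →L[ℂ] U)
    (hspec : ∀ lam ∈ spectrum ℂ
        ((G₂ : Y →L[ℂ] Z).comp
          ((C.comp ((Ring.inverse ((1 : X →L[ℂ] X) - A)).comp B) + D).comp K₀)),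
      lam.re < 0) :
    ∃ εstar : ℝ, 0 < εstar ∧ ∀ ε : ℝ, 0 < ε → ε ≤ εstar →
      SolvesRORP A B Bd C D Dd (1 : ℂ →L[ℂ] ℂ) E F
        (1 : Z →L[ℂ] Z) (G₂ : Y →L[ℂ] Z) ((ε : ℂ) • K₀) := by
  obtain ⟨εstar, hεstar0, hstable⟩ := stability A B C D hstab (G₂ : Y →L[ℂ] Z) K₀ hspec
  refine ⟨εstar, hεstar0, fun ε hε0 hεle => ?_⟩
  have hcl := hstable ε hε0 hεle
  constructor
  · exact ⟨hcl, regulation A B Bd C D Dd E F G₂ ((ε:ℂ) • K₀) hcl⟩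
  · intro A' B' Bd' C' D' Dd' E' F' hcl'
    exact regulation A' B' Bd' C' D' Dd' E' F' G₂ ((ε:ℂ) • K₀) hcl'
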